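/- Let W : ℝ → ℝ and L12, L1m2 > 0, and define W2(F) = W(‖F(e1+e2)‖/L12) + W(‖F(e1−e2)‖/L1m2) for 2×2 real matrices F. For θ ∈ ℝ let B_θ = (1/√2)·[[1−cos θ, 1+cos θ],[−sin θ, sin θ]]. Then for every θ: ‖B_θ(e1+e2)‖ = ‖e1+e2‖ and ‖B_θ(e1−e2)‖ = ‖e1−e2‖, hence W2(B_θ) = W2(I); moreover if cos θ ≠ 0 then ⟨B_θ(e1+e2), B_θ(e1−e2)⟩ ≠ ⟨e1+e2, e1−e2⟩, so B_θ preserves the norms of the basis {e1+e2, e1−e2} without preserving the inner product, i.e., B_θ is a shear on which W2 vanishes (up to the additive constant W2(I)). -/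

import Mathlib

open Matrix
open scoped RealInnerProductSpace

noncomputable section

/-- The basis vector `e₁ = (1,0)` of `ℝ²` with the Euclidean norm. -/
def e1 : EuclideanSpace ℝ (Fin 2) := EuclideanSpace.single 0 1

/-- The basis vector `e₂ = (0,1)` of `ℝ²` with the Euclidean norm. -/
def e2 : EuclideanSpace ℝ (Fin 2) := EuclideanSpace.single 1 1

lemma comp_apply' (M : Matrix (Fin 2) (Fin 2) ℝ) (x : EuclideanSpace ℝ (Fin 2)) (i : Fin 2) :
    Matrix.toEuclideanLin M x i = M i 0 * x 0 + M i 1 * x 1 := by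
  show (M *ᵥ (WithLp.equiv 2 (Fin 2 → ℝ)) x) i = _
  simp [Matrix.mulVec, dotProduct, Fin.sum_univ_two]

lemma sum0 : (e1 + e2) 0 = 1 := by simp [e1, e2, EuclideanSpace.single_apply]
lemma sum1 : (e1 + e2) 1 = 1 := by simp [e1, e2, EuclideanSpace.single_apply]
lemma diff0 : (e1 - e2) 0 = 1 := by simp [e1, e2, EuclideanSpace.single_apply]
lemma diff1 : (e1 - e2) 1 = -1 := by simp [e1, e2, EuclideanSpace.single_apply]

lemma sqrt2_pos : (0:ℝ) < Real.sqrt 2 := Real.sqrt_pos.mpr (by norm_num)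

lemma sqrt2_inv : (Real.sqrt 2)⁻¹ * Real.sqrt 2 = 1 :=
  inv_mul_cancel₀ (ne_of_gt sqrt2_pos)

lemma sqrt2_sq : Real.sqrt 2 * Real.sqrt 2 = 2 := Real.mul_self_sqrt (by norm_num)

/-- The next-nearest-neighbour part `W₂` of the Cauchy–Born energy of `(ℤ², {e₁, e₂, e₁±e₂})`
vanishes (up to the additive constant `W₂(I)`) on the one-parameter family of shears
`B_θ = (1/√2)·[[1−cos θ, 1+cos θ],[−sin θ, sin θ]]`: each `B_θ` preserves the norms of the
basis `{e₁+e₂, e₁−e₂}`, hence `W₂(B_θ) = W₂(I)`, and for `cos θ ≠ 0` it does not preserve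
the inner product. -/
theorem W2_vanishes_on_shears
    (W : ℝ → ℝ) (L12 L1m2 : ℝ) (hL12 : 0 < L12) (hL1m2 : 0 < L1m2) (θ : ℝ) :
    let W2 : Matrix (Fin 2) (Fin 2) ℝ → ℝ := fun F =>
      W (‖toEuclideanLin F (e1 + e2)‖ / L12) + W (‖toEuclideanLin F (e1 - e2)‖ / L1m2)
    let Bθ : Matrix (Fin 2) (Fin 2) ℝ := (Real.sqrt 2)⁻¹ •
      !![1 - Real.cos θ, 1 + Real.cos θ; -Real.sin θ, Real.sin θ]
    ‖toEuclideanLin Bθ (e1 + e2)‖ = ‖e1 + e2‖ ∧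
      ‖toEuclideanLin Bθ (e1 - e2)‖ = ‖e1 - e2‖ ∧
      W2 Bθ = W2 (1 : Matrix (Fin 2) (Fin 2) ℝ) ∧
      (Real.cos θ ≠ 0 →
        ⟪toEuclideanLin Bθ (e1 + e2), toEuclideanLin Bθ (e1 - e2)⟫ ≠ ⟪e1 + e2, e1 - e2⟫) := by
  intro W2 Bθ
  set c := Real.cos θ
  set s := Real.sin θ
  have hB : ∀ i j, Bθ i j = (Real.sqrt 2)⁻¹ * !![1 - c, 1 + c; -s, s] i j := fun i j => rfl
  have hB00 : Bθ 0 0 = (Real.sqrt 2)⁻¹ * (1 - c) := by rw [hB]; simp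
  have hB01 : Bθ 0 1 = (Real.sqrt 2)⁻¹ * (1 + c) := by rw [hB]; simp
  have hB10 : Bθ 1 0 = (Real.sqrt 2)⁻¹ * (-s) := by rw [hB]; simp
  have hB11 : Bθ 1 1 = (Real.sqrt 2)⁻¹ * s := by rw [hB]; simp
  have ha0 : toEuclideanLin Bθ (e1 + e2) 0 = Real.sqrt 2 := by
    rw [comp_apply', sum0, sum1, hB00, hB01]
    linear_combination Real.sqrt 2 * sqrt2_inv - (Real.sqrt 2)⁻¹ * sqrt2_sq
  have ha1 : toEuclideanLin Bθ (e1 + e2) 1 = 0 := by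
    rw [comp_apply', sum0, sum1, hB10, hB11]
    ring
  have hb0 : toEuclideanLin Bθ (e1 - e2) 0 = -(Real.sqrt 2 * c) := by
    rw [comp_apply', diff0, diff1, hB00, hB01]
    linear_combination (-c * Real.sqrt 2) * sqrt2_inv + (Real.sqrt 2)⁻¹ * c * sqrt2_sq
  have hb1 : toEuclideanLin Bθ (e1 - e2) 1 = -(Real.sqrt 2 * s) := by
    rw [comp_apply', diff0, diff1, hB10, hB11]
    linear_combination (-s * Real.sqrt 2) * sqrt2_inv + (Real.sqrt 2)⁻¹ * s * sqrt2_sq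
  have hnorm : ∀ x : EuclideanSpace ℝ (Fin 2),
      ‖x‖ = Real.sqrt (x 0 ^ 2 + x 1 ^ 2) := by
    intro x
    rw [EuclideanSpace.norm_eq]
    simp [Fin.sum_univ_two, sq_abs]
  have hcs : c ^ 2 + s ^ 2 = 1 := by
    have := Real.sin_sq_add_cos_sq θ; nlinarith
  have hsum : ‖e1 + e2‖ = Real.sqrt 2 := by
    rw [hnorm, sum0, sum1]; norm_num
  have hdiff : ‖e1 - e2‖ = Real.sqrt 2 := by
    rw [hnorm, diff0, diff1]; norm_num
  have h1 : ‖toEuclideanLin Bθ (e1 + e2)‖ = ‖e1 + e2‖ := by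
    rw [hnorm, ha0, ha1, hsum]
    norm_num [sqrt2_sq, sq]
  have h2 : ‖toEuclideanLin Bθ (e1 - e2)‖ = ‖e1 - e2‖ := by
    rw [hnorm, hb0, hb1, hdiff]
    have : (-(Real.sqrt 2 * c)) ^ 2 + (-(Real.sqrt 2 * s)) ^ 2 = 2 := by
      nlinarith [sqrt2_sq]
    rw [this]
  have hone : ∀ x : EuclideanSpace ℝ (Fin 2),
      toEuclideanLin (1 : Matrix (Fin 2) (Fin 2) ℝ) x = x := by
    intro x
    ext i
    rw [comp_apply']
    fin_cases i <;> simp [Matrix.one_apply]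
  refine ⟨h1, h2, ?_, ?_⟩
  · simp only [W2, hone, h1, h2]
  · intro hc
    have hinner : ∀ x y : EuclideanSpace ℝ (Fin 2),
        ⟪x, y⟫ = x 0 * y 0 + x 1 * y 1 := by
      intro x y
      rw [PiLp.inner_apply]
      simp [Fin.sum_univ_two, RCLike.inner_apply]
      ring
    rw [hinner, hinner, ha0, ha1, hb0, hb1, sum0, sum1,
      diff0, diff1]
    simp only [Matrix.cons_val_zero, Matrix.cons_val_one, Matrix.head_cons]
    intro h
    apply hc
    have hc0 : -2 * c = 0 := by linear_combination h + c * sqrt2_sq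
    linarith

end
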